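/- Let λ > 1. Define g(t) = (t+1)e^{λ(1-e^t)} + λ t e^t - t - 1 for t ≥ 0. Then g(0) = 0 and g(t) > 0 for all t > 0. -/

import Mathlib

/-- For `λ > 1`, the function `g(t) = (t+1) e^{λ(1-e^t)} + λ t e^t - t - 1` satisfies
`g(0) = 0` and `g(t) > 0` for all `t > 0`. -/
theorem g_pos (lam : ℝ) (hlam : 1 < lam) :
    ((0 + 1) * Real.exp (lam * (1 - Real.exp 0)) + lam * 0 * Real.exp 0 - 0 - 1 = 0) ∧
      ∀ t : ℝ, 0 < t →
        (t + 1) * Real.exp (lam * (1 - Real.exp t)) + lam * t * Real.exp t - t - 1 > 0 := by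
  set g : ℝ → ℝ := fun t => (t + 1) * Real.exp (lam * (1 - Real.exp t)) + lam * t * Real.exp t - t - 1 with hg
  have hderiv : ∀ t : ℝ, HasDerivAt g
      ((lam * Real.exp t * (t + 1) - 1) * (1 - Real.exp (lam * (1 - Real.exp t)))) t := by
    intro t
    have h1 : HasDerivAt (fun t : ℝ => lam * (1 - Real.exp t)) (lam * -Real.exp t) t :=
      ((Real.hasDerivAt_exp t).const_sub 1).const_mul lam
    have h2 : HasDerivAt (fun t : ℝ => Real.exp (lam * (1 - Real.exp t)))
        (Real.exp (lam * (1 - Real.exp t)) * (lam * -Real.exp t)) t := h1.exp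
    have h3 : HasDerivAt (fun t : ℝ => (t + 1) * Real.exp (lam * (1 - Real.exp t)))
        (1 * Real.exp (lam * (1 - Real.exp t)) +
          (t + 1) * (Real.exp (lam * (1 - Real.exp t)) * (lam * -Real.exp t))) t :=
      ((hasDerivAt_id t).add_const 1).mul h2
    have h4 : HasDerivAt (fun t : ℝ => lam * t * Real.exp t)
        (lam * (1 * Real.exp t + t * Real.exp t)) t := by
      have := ((hasDerivAt_id t).mul (Real.hasDerivAt_exp t)).const_mul lam
      simpa [mul_assoc] using this
    have h5 := ((h3.add h4).sub (hasDerivAt_id t)).sub_const 1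
    convert h5 using 1
    · rfl
    · rfl
    · rfl
    ring
  have hmono : StrictMonoOn g (Set.Ici (0 : ℝ)) := by
    apply strictMonoOn_of_deriv_pos (convex_Ici 0)
    · exact (Differentiable.continuous fun x => (hderiv x).differentiableAt).continuousOn
    · intro x hx
      rw [interior_Ici] at hx
      have hx0 : 0 < x := hx
      rw [(hderiv x).deriv]
      have hex : 1 < Real.exp x := by nlinarith [Real.add_one_le_exp x, hx0]
      have hE : Real.exp (lam * (1 - Real.exp x)) < 1 := by
        rw [Real.exp_lt_one_iff]
        nlinarith
      have h1 : 1 < lam * Real.exp x := by nlinarith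
      have : 1 < lam * Real.exp x * (x + 1) := by nlinarith [hx0, h1]
      nlinarith
  have hg0 : g 0 = 0 := by simp [hg]
  constructor
  · simp only [hg] at hg0 ⊢; exact hg0
  · intro t ht
    have hm := hmono (Set.self_mem_Ici) (Set.mem_Ici.mpr ht.le) ht
    rw [hg0] at hm
    exact hm
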